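/- Let d and t be positive integers with t ≤ d, and let Z be a t-transitive subgroup of the symmetric group S_d on {1,…,d}. Then for every point x ∈ ℝ^d and every real polynomial f in d variables of total degree at most t, (1/|S_d·x|) ∑_{y ∈ S_d·x} f(y) = (1/|Z·x|) ∑_{y ∈ Z·x} f(y), where Z·x = {(x_{σ(1)},…,x_{σ(d)}) : σ ∈ Z}. -/

import Mathlib

open Finset

/-- `Z` is `k`-transitive: `Z` acts transitively on ordered `k`-tuples of
distinct elements of `{1,…,d}` (encoded as embeddings `Fin k ↪ Fin d`). -/
def IsKTransitive {d : ℕ} (Z : Subgroup (Equiv.Perm (Fin d))) (k : ℕ) : Prop :=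
  ∀ a b : Fin k ↪ Fin d, ∃ σ ∈ Z, ∀ i, σ (a i) = b i

/-- The orbit set `Z·x = {(x_{σ(1)},…,x_{σ(d)}) : σ ∈ Z}` as a finite set. -/
noncomputable def permOrbit {d : ℕ} (Z : Set (Equiv.Perm (Fin d))) (x : Fin d → ℝ) :
    Finset (Fin d → ℝ) :=
  (Set.Finite.image (fun σ : Equiv.Perm (Fin d) => x ∘ ⇑σ) (Set.toFinite Z)).toFinset

/-- Averaging a function over the image of a map with constant fiber sizes equals
averaging the composition over the domain. -/
lemma avg_image {G β : Type*} [Group G] [DecidableEq β] (s : Finset G)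
    (h1 : (1 : G) ∈ s) (φ : G → β)
    (hconst : ∀ τ ∈ s, (s.filter fun σ => φ σ = φ τ).card
      = (s.filter fun σ => φ σ = φ 1).card)
    (F : β → ℝ) :
    (1 / ((s.image φ).card : ℝ)) * ∑ b ∈ s.image φ, F b
      = (1 / (s.card : ℝ)) * ∑ σ ∈ s, F (φ σ) := by
  set c := (s.filter fun σ => φ σ = φ 1).card with hcdef
  have hc : 0 < c := Finset.card_pos.2 ⟨1, Finset.mem_filter.2 ⟨h1, rfl⟩⟩
  have hmaps : ∀ σ ∈ s, φ σ ∈ s.image φ := fun σ hσ => Finset.mem_image_of_mem φ hσ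
  have hsum : ∑ σ ∈ s, F (φ σ) = (c : ℝ) * ∑ b ∈ s.image φ, F b := by
    rw [← Finset.sum_fiberwise_of_maps_to hmaps, Finset.mul_sum]
    refine Finset.sum_congr rfl fun b hb => ?_
    obtain ⟨τ, hτ, rfl⟩ := Finset.mem_image.1 hb
    rw [Finset.sum_congr rfl (fun σ hσ => by rw [(Finset.mem_filter.1 hσ).2]),
      Finset.sum_const, nsmul_eq_mul, hconst τ hτ]
  have hcard : s.card = c * (s.image φ).card := by
    rw [Finset.card_eq_sum_card_fiberwise hmaps]
    rw [Finset.sum_congr rfl (fun b hb => ?_), Finset.sum_const, smul_eq_mul, mul_comm]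
    obtain ⟨τ, hτ, rfl⟩ := Finset.mem_image.1 hb
    exact hconst τ hτ
  have hN : 0 < (s.image φ).card :=
    Finset.card_pos.2 ⟨φ 1, Finset.mem_image_of_mem φ h1⟩
  rw [hsum, hcard]
  push_cast
  rw [one_div, one_div, mul_inv]
  field_simp

/-- Constant fiber cardinality, right-coset version. -/
lemma const_fiber_right {G β : Type*} [Group G] [DecidableEq β] (s : Finset G)
    (hmul : ∀ a ∈ s, ∀ b ∈ s, a * b ∈ s) (hinv : ∀ a ∈ s, a⁻¹ ∈ s)
    (φ : G → β) (τ : G) (hτ : τ ∈ s)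
    (key : ∀ σ, φ σ = φ τ ↔ φ (σ * τ⁻¹) = φ 1) :
    (s.filter fun σ => φ σ = φ τ).card = (s.filter fun σ => φ σ = φ 1).card := by
  apply Finset.card_bij' (fun σ _ => σ * τ⁻¹) (fun ρ _ => ρ * τ)
  · intro σ hσ
    obtain ⟨hσs, hσφ⟩ := Finset.mem_filter.1 hσ
    exact Finset.mem_filter.2 ⟨hmul _ hσs _ (hinv _ hτ), (key σ).1 hσφ⟩
  · intro ρ hρ
    obtain ⟨hρs, hρφ⟩ := Finset.mem_filter.1 hρ
    refine Finset.mem_filter.2 ⟨hmul _ hρs _ hτ, (key _).2 ?_⟩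
    simpa using hρφ
  · intro σ _; group
  · intro ρ _; group

/-- Constant fiber cardinality, left-coset version. -/
lemma const_fiber_left {G β : Type*} [Group G] [DecidableEq β] (s : Finset G)
    (hmul : ∀ a ∈ s, ∀ b ∈ s, a * b ∈ s) (hinv : ∀ a ∈ s, a⁻¹ ∈ s)
    (φ : G → β) (τ : G) (hτ : τ ∈ s)
    (key : ∀ σ, φ σ = φ τ ↔ φ (τ⁻¹ * σ) = φ 1) :
    (s.filter fun σ => φ σ = φ τ).card = (s.filter fun σ => φ σ = φ 1).card := by
  apply Finset.card_bij' (fun σ _ => τ⁻¹ * σ) (fun ρ _ => τ * ρ)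
  · intro σ hσ
    obtain ⟨hσs, hσφ⟩ := Finset.mem_filter.1 hσ
    exact Finset.mem_filter.2 ⟨hmul _ (hinv _ hτ) _ hσs, (key σ).1 hσφ⟩
  · intro ρ hρ
    obtain ⟨hρs, hρφ⟩ := Finset.mem_filter.1 hρ
    refine Finset.mem_filter.2 ⟨hmul _ hτ _ hρs, (key _).2 ?_⟩
    simpa using hρφ
  · intro σ _; group
  · intro ρ _; group

/-- Any embedding `Fin k ↪ Fin d` extends to an embedding `Fin t ↪ Fin d` for `k ≤ t ≤ d`. -/
lemma extend_embedding {k t d : ℕ} (hkt : k ≤ t) (htd : t ≤ d) (a : Fin k ↪ Fin d) :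
    ∃ a' : Fin t ↪ Fin d, ∀ i, a' (Fin.castLE hkt i) = a i := by
  classical
  set S : Finset (Fin d) := Finset.univ.map a with hS
  have hScard : S.card = k := by simp [hS]
  have hcompl : t - k ≤ Fintype.card (↥(Sᶜ : Finset (Fin d))) := by
    rw [Fintype.card_coe, Finset.card_compl, hScard]
    simp only [Fintype.card_fin]
    omega
  obtain ⟨g⟩ := Function.Embedding.nonempty_of_card_le
    ((Fintype.card_fin (t - k)).symm ▸ hcompl)
  refine ⟨⟨fun i => if h : (i : ℕ) < k then a ⟨i, h⟩
    else (g ⟨(i : ℕ) - k, by omega⟩ : Fin d), ?_⟩, ?_⟩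
  · intro i j hij
    have hgS : ∀ m, (g m : Fin d) ∉ S := fun m => Finset.mem_compl.1 (g m).2
    have haS : ∀ m, a m ∈ S := fun m => by simp [hS]
    by_cases hi : (i : ℕ) < k <;> by_cases hj : (j : ℕ) < k <;>
      simp only [hi, hj, dif_pos, dif_neg, not_false_iff] at hij
    · have h2 := a.injective hij
      rw [Fin.ext_iff] at h2 ⊢
      simpa using h2
    · exact absurd (hij ▸ haS ⟨i, hi⟩) (hgS _)
    · exact absurd (hij.symm ▸ haS ⟨j, hj⟩) (hgS _)
    · have h2 := g.injective (Subtype.ext hij)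
      rw [Fin.ext_iff] at h2 ⊢
      simp only [] at h2
      omega
  · intro i
    exact dif_pos i.isLt

/-- A `t`-transitive family is `k`-transitive for `k ≤ t ≤ d`. -/
lemma trans_down {d t k : ℕ} (hkt : k ≤ t) (htd : t ≤ d)
    (Z : Subgroup (Equiv.Perm (Fin d))) (hZ : IsKTransitive Z t)
    (a b : Fin k ↪ Fin d) : ∃ σ ∈ Z, ∀ i, σ (a i) = b i := by
  obtain ⟨a', ha'⟩ := extend_embedding hkt htd a
  obtain ⟨b', hb'⟩ := extend_embedding hkt htd b
  obtain ⟨σ, hσZ, hσ⟩ := hZ a' b'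
  exact ⟨σ, hσZ, fun i => by rw [← ha' i, hσ, hb']⟩

/-- The full symmetric group is `k`-transitive for `k ≤ d`. -/
lemma exists_perm {d k : ℕ} (hkd : k ≤ d) (a b : Fin k ↪ Fin d) :
    ∃ σ : Equiv.Perm (Fin d), ∀ i, σ (a i) = b i := by
  obtain ⟨a', ha'⟩ := extend_embedding hkd le_rfl a
  obtain ⟨b', hb'⟩ := extend_embedding hkd le_rfl b
  have hA : Function.Bijective a' := (Finite.injective_iff_bijective).1 a'.injective
  have hB : Function.Bijective b' := (Finite.injective_iff_bijective).1 b'.injective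
  refine ⟨(Equiv.ofBijective _ hA).symm.trans (Equiv.ofBijective _ hB), fun i => ?_⟩
  have : (Equiv.ofBijective _ hA).symm (a i) = Fin.castLE hkd i := by
    rw [← ha' i]
    exact (Equiv.ofBijective _ hA).symm_apply_apply _
  simp [this, hb' i]

/-- Product over a finset via its order embedding enumeration. -/
lemma prod_orderEmb {α M : Type*} [CommMonoid M] [LinearOrder α] (s : Finset α) {k : ℕ}
    (h : s.card = k) (g : α → M) :
    ∏ i ∈ s, g i = ∏ j : Fin k, g (s.orderEmbOfFin h j) := by
  rw [← Finset.prod_coe_sort s g,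
    ← Equiv.prod_comp (s.orderIsoOfFin h).toEquiv (fun i : ↥s => g ↑i)]
  rfl

/-- Averaging a function of `σ ∘ e` over a transitive "subgroup finset" equals the
average over the image of the full symmetric group. -/
lemma group_avg_emb {d k : ℕ} (s : Finset (Equiv.Perm (Fin d)))
    (h1 : 1 ∈ s) (hmul : ∀ a ∈ s, ∀ b ∈ s, a * b ∈ s) (hinv : ∀ a ∈ s, a⁻¹ ∈ s)
    (e : Fin k ↪ Fin d)
    (htrans : ∀ b : Fin k ↪ Fin d, ∃ σ ∈ s, ∀ j, σ (e j) = b j)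
    (F : (Fin k → Fin d) → ℝ) :
    (1 / (s.card : ℝ)) * ∑ σ ∈ s, F (fun j => σ (e j))
      = (1 / ((Finset.univ.image
            (fun σ : Equiv.Perm (Fin d) => fun j => σ (e j))).card : ℝ))
        * ∑ b ∈ Finset.univ.image
            (fun σ : Equiv.Perm (Fin d) => fun j => σ (e j)), F b := by
  classical
  set φ : Equiv.Perm (Fin d) → (Fin k → Fin d) := fun σ j => σ (e j) with hφ
  have key : ∀ σ τ : Equiv.Perm (Fin d), φ σ = φ τ ↔ φ (τ⁻¹ * σ) = φ 1 := by
    intro σ τ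
    constructor
    · intro h
      funext j
      have hj := congrFun h j
      simp only [hφ] at hj ⊢
      simp [Equiv.Perm.mul_apply, hj]
    · intro h
      funext j
      have hj := congrFun h j
      simp only [hφ, Equiv.Perm.mul_apply, Equiv.Perm.one_apply] at hj ⊢
      have := congrArg τ hj
      simpa using this
  have himg : s.image φ = Finset.univ.image φ := by
    apply Finset.Subset.antisymm (Finset.image_subset_image (Finset.subset_univ s))
    intro b hb
    obtain ⟨τ, _, rfl⟩ := Finset.mem_image.1 hb
    obtain ⟨σ, hσ, hσe⟩ := htrans (e.trans τ.toEmbedding)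
    refine Finset.mem_image.2 ⟨σ, hσ, funext fun j => ?_⟩
    simpa using hσe j
  rw [← himg]
  exact (avg_image s h1 φ
    (fun τ hτ => const_fiber_left s hmul hinv φ τ hτ (fun σ => key σ τ)) F).symm

/-- Averaging over the orbit equals averaging over the group. -/
lemma orbit_avg {d : ℕ} (s : Finset (Equiv.Perm (Fin d)))
    (h1 : 1 ∈ s) (hmul : ∀ a ∈ s, ∀ b ∈ s, a * b ∈ s) (hinv : ∀ a ∈ s, a⁻¹ ∈ s)
    (x : Fin d → ℝ) (F : (Fin d → ℝ) → ℝ) :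
    (1 / ((s.image (fun σ : Equiv.Perm (Fin d) => x ∘ ⇑σ)).card : ℝ)) *
        ∑ y ∈ s.image (fun σ : Equiv.Perm (Fin d) => x ∘ ⇑σ), F y
      = (1 / (s.card : ℝ)) * ∑ σ ∈ s, F (x ∘ ⇑σ) := by
  classical
  set φ : Equiv.Perm (Fin d) → (Fin d → ℝ) := fun σ => x ∘ ⇑σ with hφ
  have key : ∀ σ τ : Equiv.Perm (Fin d), φ σ = φ τ ↔ φ (σ * τ⁻¹) = φ 1 := by
    intro σ τ
    constructor
    · intro h
      funext i
      have hj := congrFun h (τ⁻¹ i)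
      simp only [hφ, Function.comp_apply, Equiv.Perm.mul_apply,
        Equiv.Perm.one_apply] at hj ⊢
      simpa using hj
    · intro h
      funext i
      have hj := congrFun h (τ i)
      simp only [hφ, Function.comp_apply, Equiv.Perm.mul_apply,
        Equiv.Perm.one_apply] at hj ⊢
      simpa using hj
  exact avg_image s h1 φ
    (fun τ hτ => const_fiber_right s hmul hinv φ τ hτ (fun σ => key σ τ)) F

/-- The group average of a polynomial of total degree at most `t` over any
`t`-transitive "subgroup finset" is the same. -/
lemma poly_avg_eq {d t : ℕ} (htd : t ≤ d) (s₁ s₂ : Finset (Equiv.Perm (Fin d)))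
    (h1₁ : 1 ∈ s₁) (hmul₁ : ∀ a ∈ s₁, ∀ b ∈ s₁, a * b ∈ s₁)
    (hinv₁ : ∀ a ∈ s₁, a⁻¹ ∈ s₁)
    (htr₁ : ∀ (k : ℕ), k ≤ t → ∀ a b : Fin k ↪ Fin d, ∃ σ ∈ s₁, ∀ i, σ (a i) = b i)
    (h1₂ : 1 ∈ s₂) (hmul₂ : ∀ a ∈ s₂, ∀ b ∈ s₂, a * b ∈ s₂)
    (hinv₂ : ∀ a ∈ s₂, a⁻¹ ∈ s₂)
    (htr₂ : ∀ (k : ℕ), k ≤ t → ∀ a b : Fin k ↪ Fin d, ∃ σ ∈ s₂, ∀ i, σ (a i) = b i)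
    (x : Fin d → ℝ) (f : MvPolynomial (Fin d) ℝ) (hf : f.totalDegree ≤ t) :
    (1 / (s₁.card : ℝ)) * ∑ σ ∈ s₁, MvPolynomial.eval (x ∘ ⇑σ) f
      = (1 / (s₂.card : ℝ)) * ∑ σ ∈ s₂, MvPolynomial.eval (x ∘ ⇑σ) f := by
  classical
  have key : ∀ (s : Finset (Equiv.Perm (Fin d))), 1 ∈ s →
      (∀ a ∈ s, ∀ b ∈ s, a * b ∈ s) → (∀ a ∈ s, a⁻¹ ∈ s) →
      (∀ (k : ℕ), k ≤ t → ∀ a b : Fin k ↪ Fin d, ∃ σ ∈ s, ∀ i, σ (a i) = b i) →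
      (1 / (s.card : ℝ)) * ∑ σ ∈ s, MvPolynomial.eval (x ∘ ⇑σ) f
        = ∑ m ∈ f.support, f.coeff m *
            ((1 / ((Finset.univ.image (fun σ : Equiv.Perm (Fin d) =>
                fun j : Fin m.support.card => σ (m.support.orderEmbOfFin rfl j))).card : ℝ))
              * ∑ b ∈ Finset.univ.image (fun σ : Equiv.Perm (Fin d) =>
                  fun j : Fin m.support.card => σ (m.support.orderEmbOfFin rfl j)),
                  ∏ j : Fin m.support.card,
                    x (b j) ^ m (m.support.orderEmbOfFin rfl j)) := by
    intro s h1 hmul hinv htr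
    have heval : ∀ σ : Equiv.Perm (Fin d), MvPolynomial.eval (x ∘ ⇑σ) f
        = ∑ m ∈ f.support, f.coeff m *
            ∏ j : Fin m.support.card,
              x (σ ((m.support.orderEmbOfFin rfl) j)) ^ m (m.support.orderEmbOfFin rfl j) := by
      intro σ
      rw [MvPolynomial.eval_eq]
      refine Finset.sum_congr rfl fun m _ => ?_
      congr 1
      rw [prod_orderEmb m.support rfl (fun i => (x ∘ ⇑σ) i ^ m i)]
      rfl
    calc (1 / (s.card : ℝ)) * ∑ σ ∈ s, MvPolynomial.eval (x ∘ ⇑σ) f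
        = ∑ m ∈ f.support, f.coeff m * ((1 / (s.card : ℝ)) *
            ∑ σ ∈ s, ∏ j : Fin m.support.card,
              x (σ ((m.support.orderEmbOfFin rfl) j)) ^ m (m.support.orderEmbOfFin rfl j)) := by
          simp only [heval]
          rw [Finset.sum_comm, Finset.mul_sum]
          refine Finset.sum_congr rfl fun m _ => ?_
          rw [← Finset.mul_sum]
          ring
      _ = _ := by
          refine Finset.sum_congr rfl fun m hm => ?_
          congr 1
          have hk : m.support.card ≤ t := by
            have h1' : m.support.card ≤ m.sum fun _ n => n := by
              have := Finset.card_nsmul_le_sum m.support (fun i => m i) 1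
                (fun i hi => Nat.one_le_iff_ne_zero.2 (Finsupp.mem_support_iff.1 hi))
              simpa [Finsupp.sum] using this
            exact h1'.trans ((MvPolynomial.le_totalDegree hm).trans hf)
          exact group_avg_emb s h1 hmul hinv ((m.support.orderEmbOfFin rfl).toEmbedding)
            (fun b => htr m.support.card hk _ b)
            (fun b => ∏ j : Fin m.support.card, x (b j) ^ m (m.support.orderEmbOfFin rfl j))
  rw [key s₁ h1₁ hmul₁ hinv₁ htr₁, key s₂ h1₂ hmul₂ hinv₂ htr₂]

theorem stmt1 (d t : ℕ) (hd : 0 < d) (ht : 0 < t) (htd : t ≤ d)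
    (Z : Subgroup (Equiv.Perm (Fin d))) (hZtrans : IsKTransitive Z t)
    (x : Fin d → ℝ) (f : MvPolynomial (Fin d) ℝ) (hf : f.totalDegree ≤ t) :
    (1 / ((permOrbit (Set.univ : Set (Equiv.Perm (Fin d))) x).card : ℝ)) *
        ∑ y ∈ permOrbit (Set.univ : Set (Equiv.Perm (Fin d))) x, MvPolynomial.eval y f
      = (1 / ((permOrbit (Z : Set (Equiv.Perm (Fin d))) x).card : ℝ)) *
          ∑ y ∈ permOrbit (Z : Set (Equiv.Perm (Fin d))) x, MvPolynomial.eval y f := by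
  classical
  set sZ : Finset (Equiv.Perm (Fin d)) := (Set.toFinite (Z : Set (Equiv.Perm (Fin d)))).toFinset
    with hsZ
  set sU : Finset (Equiv.Perm (Fin d)) :=
    (Set.toFinite (Set.univ : Set (Equiv.Perm (Fin d)))).toFinset with hsU
  have hmemZ : ∀ σ : Equiv.Perm (Fin d), σ ∈ sZ ↔ σ ∈ Z := fun σ => by
    rw [hsZ, Set.Finite.mem_toFinset]; exact SetLike.mem_coe
  have hmemU : ∀ σ : Equiv.Perm (Fin d), σ ∈ sU := fun σ => by
    simp [hsU, Set.Finite.mem_toFinset]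
  have horbZ : permOrbit (Z : Set (Equiv.Perm (Fin d))) x
      = sZ.image (fun σ : Equiv.Perm (Fin d) => x ∘ ⇑σ) :=
    Set.Finite.toFinset_image _ _ _
  have horbU : permOrbit (Set.univ : Set (Equiv.Perm (Fin d))) x
      = sU.image (fun σ : Equiv.Perm (Fin d) => x ∘ ⇑σ) :=
    Set.Finite.toFinset_image _ _ _
  rw [horbZ, horbU,
    orbit_avg sU (hmemU 1) (fun a _ b _ => hmemU _) (fun a _ => hmemU _) x
      (fun y => MvPolynomial.eval y f),
    orbit_avg sZ ((hmemZ 1).2 Z.one_mem)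
      (fun a ha b hb => (hmemZ _).2 (Z.mul_mem ((hmemZ a).1 ha) ((hmemZ b).1 hb)))
      (fun a ha => (hmemZ _).2 (Z.inv_mem ((hmemZ a).1 ha))) x
      (fun y => MvPolynomial.eval y f)]
  refine poly_avg_eq htd sU sZ (hmemU 1) (fun a _ b _ => hmemU _) (fun a _ => hmemU _)
    ?_ ((hmemZ 1).2 Z.one_mem)
    (fun a ha b hb => (hmemZ _).2 (Z.mul_mem ((hmemZ a).1 ha) ((hmemZ b).1 hb)))
    (fun a ha => (hmemZ _).2 (Z.inv_mem ((hmemZ a).1 ha))) ?_ x f hf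
  · intro k hk a b
    obtain ⟨σ, hσ⟩ := exists_perm (hk.trans htd) a b
    exact ⟨σ, hmemU σ, hσ⟩
  · intro k hk a b
    obtain ⟨σ, hσZ, hσ⟩ := trans_down hk htd Z hZtrans a b
    exact ⟨σ, (hmemZ σ).2 hσZ, hσ⟩
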